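/- Let W be a finite-dimensional real vector space, V a finite set, and φ : V → W a map. Let f, g be linear functionals on W and suppose v ∈ V satisfies f(φ v) > 0 and g(φ v) < 0. Then there exists a linear functional h on W (for instance h = (−g(φ v))·f + (f(φ v))·g) such that: h(φ v) = 0; for every w ∈ V with f(φ w) = 0 and g(φ w) = 0 one has h(φ w) = 0; for every w ∈ V with f(φ w) ≥ 0, g(φ w) ≥ 0 and not both zero one has h(φ w) > 0; and for every w ∈ V with f(φ w) ≤ 0, g(φ w) ≤ 0 and not both zero one has h(φ w) < 0. (Realizability of the elimination axiom, covector axiom 4, for vector configurations.) -/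
import Mathlib


/-- Realizability of the elimination axiom (covector axiom 4) for vector
configurations: given functionals `f, g` with `f (φ v) > 0` and `g (φ v) < 0`,
there is a functional `h` eliminating `v` with the required sign behavior. -/
theorem exists_functional_realizing_elimination
    (V : Type*) [Fintype V] (W : Type*) [AddCommGroup W] [Module ℝ W]
    [FiniteDimensional ℝ W] (φ : V → W) (f g : W →ₗ[ℝ] ℝ) (v : V)
    (hf : 0 < f (φ v)) (hg : g (φ v) < 0) :
    ∃ h : W →ₗ[ℝ] ℝ,
      h (φ v) = 0 ∧
      (∀ w : V, f (φ w) = 0 → g (φ w) = 0 → h (φ w) = 0) ∧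
      (∀ w : V, 0 ≤ f (φ w) → 0 ≤ g (φ w) → ¬(f (φ w) = 0 ∧ g (φ w) = 0) →
        0 < h (φ w)) ∧
      (∀ w : V, f (φ w) ≤ 0 → g (φ w) ≤ 0 → ¬(f (φ w) = 0 ∧ g (φ w) = 0) →
        h (φ w) < 0) := by
  refine ⟨(-g (φ v)) • f + (f (φ v)) • g, by simp; ring, ?_, ?_, ?_⟩
  · intro w h1 h2; simp [h1, h2]
  · intro w h1 h2 h3
    have : 0 < (-g (φ v)) * f (φ w) + f (φ v) * g (φ w) := by
      rcases lt_or_eq_of_le h1 with h1' | h1'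
      · nlinarith
      · have h2' : 0 < g (φ w) := lt_of_le_of_ne h2 (by tauto)
        nlinarith
    simpa using this
  · intro w h1 h2 h3
    have : (-g (φ v)) * f (φ w) + f (φ v) * g (φ w) < 0 := by
      rcases lt_or_eq_of_le h1 with h1' | h1'
      · nlinarith
      · have h2' : g (φ w) < 0 := lt_of_le_of_ne h2 (by tauto)
        nlinarith
    simpa using this
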